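/- Let M be a closed oriented Riemannian 4-manifold and ρ a symplectic form with ρ∧ρ > 0 cohomologous to a self-dual symplectic form ω. Then E(ρ) := ∫_M 2|ρ⁺|²/(|ρ⁺|²-|ρ⁻|²) dvol ≥ 2 Vol(M), with equality if and only if ρ = ω; in particular ω is the unique absolute minimum of E on its cohomology class. -/

import Mathlib

open Matrix MeasureTheory

noncomputable section

/-- Vectors in ℝ⁴. -/
abbrev V4 : Type := Fin 4 → ℝ

/-- 2-forms on ℝ⁴, represented by their (antisymmetric) coefficient matrices. -/
abbrev Mat4 : Type := Matrix (Fin 4) (Fin 4) ℝ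

/-- The wedge product of two 2-forms, as the coefficient of dx0∧dx1∧dx2∧dx3. -/
def w22 (A B : Mat4) : ℝ :=
  A 0 1 * B 2 3 - A 0 2 * B 1 3 + A 0 3 * B 1 2 +
  A 2 3 * B 0 1 - A 1 3 * B 0 2 + A 1 2 * B 0 3

/-- The wedge product of a 1-form and a 3-form (3-forms are written in the
basis σ_m = ι(e_m)(dx0∧dx1∧dx2∧dx3)), as a multiple of dx0∧dx1∧dx2∧dx3. -/
def w13 (l b : V4) : ℝ := l ⬝ᵥ b

/-- The wedge product of a 2-form and a 1-form, as a 3-form in the basis σ_m. -/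
def w21 (A : Mat4) (l : V4) : V4 :=
  ![A 1 2 * l 3 - A 1 3 * l 2 + A 2 3 * l 1,
    -(A 0 2 * l 3 - A 0 3 * l 2 + A 2 3 * l 0),
    A 0 1 * l 3 - A 0 3 * l 1 + A 1 3 * l 0,
    -(A 0 1 * l 2 - A 0 2 * l 1 + A 1 2 * l 0)]

/-- Interior product of a vector with a 2-form. -/
def iota2 (v : V4) (A : Mat4) : V4 := Aᵀ.mulVec v

/-- Interior product of a vector with a 4-form c·dx0∧dx1∧dx2∧dx3. -/
def iota4 (v : V4) (c : ℝ) : V4 := c • v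

/-- The metric volume form of the inner product with Gram matrix G, as a
multiple of dx0∧dx1∧dx2∧dx3 (standard orientation). -/
def volScalar (G : Mat4) : ℝ := Real.sqrt G.det

/-- The inner product with Gram matrix G. -/
def bilin (G : Mat4) (v w : V4) : ℝ := v ⬝ᵥ G.mulVec w

/-- The induced inner product on 1-forms. -/
def ip1 (G : Mat4) (l m : V4) : ℝ := l ⬝ᵥ G⁻¹.mulVec m

/-- The induced inner product on 2-forms. -/
def ip2 (G : Mat4) (A B : Mat4) : ℝ := (1 / 2) * (Aᵀ * G⁻¹ * B * G⁻¹).trace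

/-- The wedge-duality involution on 2-forms (the Hodge star of the standard
metric), characterized by w22 A (dual2 B) = ip2 1 A B. -/
def dual2 (A : Mat4) : Mat4 :=
  !![0, A 2 3, -(A 1 3), A 1 2;
     -(A 2 3), 0, A 0 3, -(A 0 2);
     A 1 3, -(A 0 3), 0, A 0 1;
     -(A 1 2), A 0 2, -(A 0 1), 0]

/-- The Hodge star on 2-forms of the metric with Gram matrix G,
characterized by α ∧ (hodge2 G β) = ⟨α,β⟩_G dvol_G. -/
def hodge2 (G : Mat4) (A : Mat4) : Mat4 := volScalar G • dual2 (G⁻¹ * A * G⁻¹)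

/-- The Hodge star Λ¹ → Λ³ of G, characterized by λ ∧ (hodge1 G μ) = ⟨λ,μ⟩_G dvol_G. -/
def hodge1 (G : Mat4) (m : V4) : V4 := volScalar G • G⁻¹.mulVec m

/-- The Hodge star Λ³ → Λ¹ of G, characterized by hodge1 G (hodge3 G b) = -b. -/
def hodge3 (G : Mat4) (b : V4) : V4 := -((volScalar G)⁻¹ • G.mulVec b)

/-- A complex structure J (J² = -1) is compatible with the standard orientation. -/
def posOrient (J : Mat4) : Prop :=
  ∃ v w : V4, 0 < (Matrix.of fun i k => ![v, J.mulVec v, w, J.mulVec w] k i).det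

/-- The inner product on 2-forms induced by the standard metric. -/
def ip2std (A B : Mat4) : ℝ := (1 / 2) * (Aᵀ * B).trace

/-- The involution R^ρ of the space of 2-forms determined by a
nondegenerate 2-form ρ (with matrix P). -/
def Rmap (P A : Mat4) : Mat4 := A - (w22 A P / (w22 P P / 2)) • P

/-- The standard hyperKähler triple ω₁ = dx0∧dx1 + dx2∧dx3, etc. -/
def sW1 : Mat4 := !![0,1,0,0; -1,0,0,0; 0,0,0,1; 0,0,-1,0]
def sW2 : Mat4 := !![0,0,1,0; 0,0,0,-1; -1,0,0,0; 0,1,0,0]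
def sW3 : Mat4 := !![0,0,0,1; 0,0,1,0; 0,-1,0,0; -1,0,0,0]


/-- Auxiliary: anti-self-dual energy density. -/
def Skey (A : Mat4) : ℝ :=
  ((A 0 1 - A 2 3)^2 + (A 0 2 + A 1 3)^2 + (A 0 3 - A 1 2)^2)/2

lemma Skey_nonneg (A : Mat4) : 0 ≤ Skey A := by unfold Skey; positivity

lemma dual2_antisymm (A : Mat4) : (dual2 A)ᵀ = -(dual2 A) := by
  ext i j; fin_cases i <;> fin_cases j <;> simp [dual2]

lemma ip2std_plus (A : Mat4) (h : Aᵀ = -A) :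
    ip2std ((2:ℝ)⁻¹ • (A + dual2 A)) ((2:ℝ)⁻¹ • (A + dual2 A)) = w22 A A + Skey A := by
  have e : ∀ i j : Fin 4, A j i = -A i j := fun i j => by
    have := congrFun (congrFun h i) j; simpa using this
  have h00 : A 0 0 = 0 := by have := e 0 0; linarith
  have h11 : A 1 1 = 0 := by have := e 1 1; linarith
  have h22 : A 2 2 = 0 := by have := e 2 2; linarith
  have h33 : A 3 3 = 0 := by have := e 3 3; linarith
  have h10 : A 1 0 = -A 0 1 := e 0 1
  have h20 : A 2 0 = -A 0 2 := e 0 2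
  have h30 : A 3 0 = -A 0 3 := e 0 3
  have h21 : A 2 1 = -A 1 2 := e 1 2
  have h31 : A 3 1 = -A 1 3 := e 1 3
  have h32 : A 3 2 = -A 2 3 := e 2 3
  have ht : ((2:ℝ)⁻¹ • (A + dual2 A))ᵀ = (2:ℝ)⁻¹ • (-A + -(dual2 A)) := by
    rw [Matrix.transpose_smul, Matrix.transpose_add, h, dual2_antisymm]
  rw [ip2std, ht]
  simp [Matrix.trace, Matrix.mul_apply, Fin.sum_univ_four, dual2, w22, Skey,
    Matrix.smul_apply, Matrix.add_apply, Matrix.neg_apply, Matrix.diag,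
    h00, h11, h22, h33, h10, h20, h30, h21, h31, h32]
  ring

lemma Skey_eq_zero_iff (A : Mat4) (h : Aᵀ = -A) : Skey A = 0 ↔ dual2 A = A := by
  have e : ∀ i j : Fin 4, A j i = -A i j := fun i j => by
    have := congrFun (congrFun h i) j; simpa using this
  have h00 : A 0 0 = 0 := by have := e 0 0; linarith
  have h11 : A 1 1 = 0 := by have := e 1 1; linarith
  have h22 : A 2 2 = 0 := by have := e 2 2; linarith
  have h33 : A 3 3 = 0 := by have := e 3 3; linarith
  constructor
  · intro hs
    have h1 : A 0 1 - A 2 3 = 0 ∧ A 0 2 + A 1 3 = 0 ∧ A 0 3 - A 1 2 = 0 := by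
      unfold Skey at hs
      refine ⟨?_, ?_, ?_⟩ <;> nlinarith [sq_nonneg (A 0 1 - A 2 3),
        sq_nonneg (A 0 2 + A 1 3), sq_nonneg (A 0 3 - A 1 2)]
    obtain ⟨ha, hb, hc⟩ := h1
    ext i j
    fin_cases i <;> fin_cases j <;>
      simp [dual2, h00, h11, h22, h33, e 0 1, e 0 2, e 0 3, e 1 2, e 1 3, e 2 3] <;>
      linarith
  · intro hd
    have ha01 : A 0 1 = A 2 3 := by
      have := congrFun (congrFun hd 0) 1; simpa [dual2] using this.symm
    have ha02 : A 0 2 = -A 1 3 := by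
      have := congrFun (congrFun hd 0) 2; simpa [dual2] using this.symm
    have ha03 : A 0 3 = A 1 2 := by
      have := congrFun (congrFun hd 0) 3; simpa [dual2] using this.symm
    unfold Skey
    rw [ha01, ha02, ha03]; ring

lemma half_add_self_mat (A : Mat4) : (2:ℝ)⁻¹ • (A + A) = A := by
  ext i j; simp [Matrix.smul_apply, Matrix.add_apply]; ring

/-- if ρ is cohomologous to a self-dual symplectic form ω on a
closed oriented Riemannian 4-manifold (modelled as a compact space with a
finite open-positive measure; the Hodge-theoretic consequences of being
cohomologous are the hypotheses hvol and hharm), then E(ρ) ≥ 2 Vol(M) with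
equality iff ρ = ω; in particular ω is the unique absolute minimum of E. -/
theorem energy_absolute_minimum {M : Type*} [TopologicalSpace M] [CompactSpace M]
    [MeasurableSpace M] [BorelSpace M]
    (μ : Measure M) [IsFiniteMeasure μ] [μ.IsOpenPosMeasure]
    (ρ ω : M → Mat4)
    (hρcont : ∀ i j, Continuous fun x => ρ x i j)
    (hρanti : ∀ x, (ρ x)ᵀ = -(ρ x)) (hρndg : ∀ x, 0 < w22 (ρ x) (ρ x))
    (hωanti : ∀ x, (ω x)ᵀ = -(ω x)) (hωndg : ∀ x, 0 < w22 (ω x) (ω x))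
    (hωsd : ∀ x, dual2 (ω x) = ω x)
    (hvol : ∫ x, w22 (ρ x) (ρ x) ∂μ = ∫ x, w22 (ω x) (ω x) ∂μ)
    (hharm : (∀ x, dual2 (ρ x) = ρ x) → ρ = ω) :
    let E := ∫ x,
      2 * ip2std ((2:ℝ)⁻¹ • (ρ x + dual2 (ρ x))) ((2:ℝ)⁻¹ • (ρ x + dual2 (ρ x))) /
        w22 (ρ x) (ρ x) ∂μ
    2 * (μ Set.univ).toReal ≤ E ∧ (E = 2 * (μ Set.univ).toReal ↔ ρ = ω) := by
  intro E
  set f : M → ℝ := fun x =>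
    2 * ip2std ((2:ℝ)⁻¹ • (ρ x + dual2 (ρ x))) ((2:ℝ)⁻¹ • (ρ x + dual2 (ρ x))) /
      w22 (ρ x) (ρ x) with hf
  have hfeq : ∀ x, f x = 2 + 2 * Skey (ρ x) / w22 (ρ x) (ρ x) := by
    intro x
    rw [hf]
    simp only
    rw [ip2std_plus _ (hρanti x)]
    have hw : w22 (ρ x) (ρ x) ≠ 0 := ne_of_gt (hρndg x)
    field_simp
  have hwcont : Continuous fun x => w22 (ρ x) (ρ x) := by
    unfold w22
    exact ((((((hρcont 0 1).mul (hρcont 2 3)).sub ((hρcont 0 2).mul (hρcont 1 3))).add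
      ((hρcont 0 3).mul (hρcont 1 2))).add ((hρcont 2 3).mul (hρcont 0 1))).sub
      ((hρcont 1 3).mul (hρcont 0 2))).add ((hρcont 1 2).mul (hρcont 0 3))
  have hscont : Continuous fun x => Skey (ρ x) := by
    unfold Skey
    exact (((((hρcont 0 1).sub (hρcont 2 3)).pow 2).add
      (((hρcont 0 2).add (hρcont 1 3)).pow 2)).add
      (((hρcont 0 3).sub (hρcont 1 2)).pow 2)).div_const 2
  have hfcont : Continuous f := by
    have : Continuous fun x => 2 + 2 * Skey (ρ x) / w22 (ρ x) (ρ x) :=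
      continuous_const.add (((continuous_const.mul hscont).div hwcont)
        (fun x => ne_of_gt (hρndg x)))
    exact (funext hfeq ▸ this : Continuous f)
  have hfint : Integrable f μ :=
    hfcont.integrable_of_hasCompactSupport (HasCompactSupport.of_compactSpace f)
  have hfge : ∀ x, 2 ≤ f x := by
    intro x
    rw [hfeq x]
    have hd : 0 ≤ 2 * Skey (ρ x) / w22 (ρ x) (ρ x) :=
      div_nonneg (by linarith [Skey_nonneg (ρ x)]) (le_of_lt (hρndg x))
    linarith
  have hint2 : ∫ _ : M, (2:ℝ) ∂μ = 2 * (μ Set.univ).toReal := by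
    rw [integral_const]; rw [smul_eq_mul, Measure.real]; ring
  have hEf : E = ∫ x, f x ∂μ := rfl
  constructor
  · rw [hEf, ← hint2]
    exact integral_mono (integrable_const 2) hfint hfge
  · constructor
    · intro hE
      apply hharm
      intro x
      rw [← Skey_eq_zero_iff _ (hρanti x)]
      -- show the nonnegative function f - 2 has zero integral, hence is zero
      have hzero : ∫ x, (f x - 2) ∂μ = 0 := by
        rw [integral_sub hfint (integrable_const 2), hint2, ← hEf, hE]; ring
      have hae : (fun x => f x - 2) =ᵐ[μ] 0 :=
        (integral_eq_zero_iff_of_nonneg (fun x => by have := hfge x; simp; linarith)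
          (hfint.sub (integrable_const 2))).mp hzero
      have heq : (fun x => f x - 2) = 0 :=
        (Continuous.ae_eq_iff_eq μ (hfcont.sub continuous_const) continuous_const).mp hae
      have hx : f x - 2 = 0 := congrFun heq x
      rw [hfeq x] at hx
      have hw : w22 (ρ x) (ρ x) ≠ 0 := ne_of_gt (hρndg x)
      field_simp at hx
      linarith [hρndg x]
    · intro hρω
      subst hρω
      have : ∀ x, f x = 2 := by
        intro x
        rw [hfeq x, (Skey_eq_zero_iff _ (hρanti x)).mpr (hωsd x)]
        simp
      rw [hEf]
      calc ∫ x, f x ∂μ = ∫ _ : M, (2:ℝ) ∂μ := by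
            exact integral_congr_ae (Filter.Eventually.of_forall this)
        _ = 2 * (μ Set.univ).toReal := hint2


end
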